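/- A translation-invariant, rotation-covariant, time-reversal-invariant vector-valued observable has no component along the momentum (spin-zero case): Let A : ℝ³ × ℝ³ → ℝ³ be C¹ and satisfy (i) {P_a, A^b} = 0 for all a,b (invariance under spatial translations); (ii) {J_{ab}, A^c} = δ_a^c A_b − δ_b^c A_a for all a,b,c (A transforms as a vector under rotations); and (iii) A(x, −p) = A(x, p) for all (x,p) (invariance under time reversal). Then A(x,p) · p = 0 for all (x,p) ∈ ℝ³ × ℝ³. -/

import Mathlib

noncomputable section

open scoped BigOperators

/-- The phase space `Γ = ℝ³ × ℝ³` with points `(x, p)`. -/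
abbrev Phase := (Fin 3 → ℝ) × (Fin 3 → ℝ)

/-- The canonical Poisson bracket
`{f,g} = Σ_a (∂f/∂x^a · ∂g/∂p_a − ∂f/∂p_a · ∂g/∂x^a)` on `Γ = ℝ³ × ℝ³`. -/
def pb (f g : Phase → ℝ) (z : Phase) : ℝ :=
  ∑ a : Fin 3,
    (fderiv ℝ f z ((Pi.single a 1 : Fin 3 → ℝ), (0 : Fin 3 → ℝ))
        * fderiv ℝ g z ((0 : Fin 3 → ℝ), (Pi.single a 1 : Fin 3 → ℝ))
      - fderiv ℝ f z ((0 : Fin 3 → ℝ), (Pi.single a 1 : Fin 3 → ℝ))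
        * fderiv ℝ g z ((Pi.single a 1 : Fin 3 → ℝ), (0 : Fin 3 → ℝ)))

namespace InvAux

def Lsnd (a : Fin 3) : Phase →L[ℝ] ℝ :=
  (ContinuousLinearMap.proj a).comp (ContinuousLinearMap.snd ℝ (Fin 3 → ℝ) (Fin 3 → ℝ))
def Lfst (a : Fin 3) : Phase →L[ℝ] ℝ :=
  (ContinuousLinearMap.proj a).comp (ContinuousLinearMap.fst ℝ (Fin 3 → ℝ) (Fin 3 → ℝ))

@[simp] lemma Lsnd_apply (a : Fin 3) (v : Phase) : Lsnd a v = v.2 a := rfl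
@[simp] lemma Lfst_apply (a : Fin 3) (v : Phase) : Lfst a v = v.1 a := rfl

lemma fderiv_snd (a : Fin 3) (z : Phase) :
    fderiv ℝ (fun w : Phase => w.2 a) z = Lsnd a := (Lsnd a).hasFDerivAt.fderiv

lemma fderiv_quad (a b : Fin 3) (z : Phase) :
    fderiv ℝ (fun w : Phase => w.1 a * w.2 b - w.1 b * w.2 a) z
      = (z.1 a • Lsnd b + z.2 b • Lfst a) - (z.1 b • Lsnd a + z.2 a • Lfst b) :=
  (((Lfst a).hasFDerivAt.mul (Lsnd b).hasFDerivAt).sub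
    ((Lfst b).hasFDerivAt.mul (Lsnd a).hasFDerivAt)).fderiv

variable {A : Phase → Fin 3 → ℝ}

lemma hasF_comp (hA : Differentiable ℝ A) (b : Fin 3) (z : Phase) :
    HasFDerivAt (fun w => A w b) ((ContinuousLinearMap.proj b).comp (fderiv ℝ A z)) z :=
  (ContinuousLinearMap.proj b (R := ℝ) (φ := fun _ : Fin 3 => ℝ)).hasFDerivAt.comp z
    (hA z).hasFDerivAt

lemma fderiv_compA (hA : Differentiable ℝ A) (b : Fin 3) (z : Phase) :
    fderiv ℝ (fun w => A w b) z = (ContinuousLinearMap.proj b).comp (fderiv ℝ A z) :=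
  (hasF_comp hA b z).fderiv

lemma stepA (hA : Differentiable ℝ A)
    (htrans : ∀ a b : Fin 3, ∀ z : Phase, pb (fun w => w.2 a) (fun w => A w b) z = 0) :
    ∀ a b : Fin 3, ∀ z : Phase, fderiv ℝ A z ((Pi.single a 1 : Fin 3 → ℝ), 0) b = 0 := by
  intro a b z
  have h := htrans a b z
  unfold pb at h
  rw [fderiv_snd] at h
  simp only [fderiv_compA hA, ContinuousLinearMap.comp_apply, ContinuousLinearMap.proj_apply,
    Lsnd_apply, Fin.sum_univ_three, Pi.single_apply] at h
  fin_cases a <;> simp_all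

lemma stepB (hA : Differentiable ℝ A)
    (htrans : ∀ a b : Fin 3, ∀ z : Phase, pb (fun w => w.2 a) (fun w => A w b) z = 0)
    (hrot : ∀ a b c : Fin 3, ∀ z : Phase,
      pb (fun w => w.1 a * w.2 b - w.1 b * w.2 a) (fun w => A w c) z
        = (if a = c then A z b else 0) - (if b = c then A z a else 0)) :
    ∀ a b d : Fin 3, ∀ z : Phase,
      z.2 b * fderiv ℝ A z (0, (Pi.single a 1 : Fin 3 → ℝ)) d
        - z.2 a * fderiv ℝ A z (0, (Pi.single b 1 : Fin 3 → ℝ)) d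
      = (if a = d then A z b else 0) - (if b = d then A z a else 0) := by
  intro a b d z
  have h := hrot a b d z
  unfold pb at h
  rw [fderiv_quad] at h
  simp only [fderiv_compA hA, ContinuousLinearMap.comp_apply, ContinuousLinearMap.proj_apply,
    ContinuousLinearMap.sub_apply, ContinuousLinearMap.add_apply, ContinuousLinearMap.smul_apply,
    Lsnd_apply, Lfst_apply, Fin.sum_univ_three, Pi.single_apply, smul_eq_mul,
    stepA hA htrans] at h
  fin_cases a <;> fin_cases b <;>
    · rw [← h]; norm_num [Fin.ext_iff]
      try simp only [show (⟨2, by omega⟩ : Fin 3) = 2 from rfl]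
      try ring

/-- the observable `A · p`. -/
def S (A : Phase → Fin 3 → ℝ) : Phase → ℝ := fun w => ∑ d, A w d * w.2 d

lemma hasF_S (hA : Differentiable ℝ A) (z : Phase) :
    HasFDerivAt (S A)
      (∑ d, (A z d • Lsnd d + z.2 d • ((ContinuousLinearMap.proj d).comp (fderiv ℝ A z)))) z :=
  HasFDerivAt.fun_sum fun d _ => (hasF_comp hA d z).mul (Lsnd d).hasFDerivAt

lemma fderivS_apply (hA : Differentiable ℝ A) (z : Phase) (v : Fin 3 → ℝ) :
    fderiv ℝ (S A) z (0, v)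
      = ∑ d, (A z d * v d + z.2 d * fderiv ℝ A z (0, v) d) := by
  rw [(hasF_S hA z).fderiv]
  simp [ContinuousLinearMap.sum_apply, mul_comm]

lemma expandS (hA : Differentiable ℝ A) (z : Phase) (c : Fin 3) :
    fderiv ℝ (S A) z (0, (Pi.single c 1 : Fin 3 → ℝ))
      = A z c + ∑ d, z.2 d * fderiv ℝ A z (0, (Pi.single c 1 : Fin 3 → ℝ)) d := by
  rw [fderivS_apply hA, Finset.sum_add_distrib]
  congr 1
  simp [Pi.single_apply, mul_ite, Finset.sum_ite_eq']

lemma stepD (hA : Differentiable ℝ A)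
    (htrans : ∀ a b : Fin 3, ∀ z : Phase, pb (fun w => w.2 a) (fun w => A w b) z = 0)
    (hrot : ∀ a b c : Fin 3, ∀ z : Phase,
      pb (fun w => w.1 a * w.2 b - w.1 b * w.2 a) (fun w => A w c) z
        = (if a = c then A z b else 0) - (if b = c then A z a else 0))
    (a b : Fin 3) (z : Phase) :
    z.2 b * fderiv ℝ (S A) z (0, (Pi.single a 1 : Fin 3 → ℝ))
      = z.2 a * fderiv ℝ (S A) z (0, (Pi.single b 1 : Fin 3 → ℝ)) := by
  rw [expandS hA, expandS hA, mul_add, mul_add, Finset.mul_sum, Finset.mul_sum]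
  have hsum : ∑ d : Fin 3, (z.2 b * (z.2 d * fderiv ℝ A z (0, (Pi.single a 1 : Fin 3 → ℝ)) d)
      - z.2 a * (z.2 d * fderiv ℝ A z (0, (Pi.single b 1 : Fin 3 → ℝ)) d))
      = ∑ d : Fin 3, z.2 d *
          ((if a = d then A z b else 0) - (if b = d then A z a else 0)) :=
    Finset.sum_congr rfl fun d _ => by
      linear_combination z.2 d * stepB hA htrans hrot a b d z
  rw [Finset.sum_sub_distrib] at hsum
  have hsum2 : ∑ d : Fin 3, z.2 d *
      ((if a = d then A z b else 0) - (if b = d then A z a else 0))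
      = z.2 a * A z b - z.2 b * A z a := by
    simp [mul_sub, mul_ite, Finset.sum_sub_distrib, Finset.sum_ite_eq]
  rw [hsum2] at hsum
  linarith [hsum]

lemma stepE (hA : Differentiable ℝ A)
    (htrans : ∀ a b : Fin 3, ∀ z : Phase, pb (fun w => w.2 a) (fun w => A w b) z = 0)
    (hrot : ∀ a b c : Fin 3, ∀ z : Phase,
      pb (fun w => w.1 a * w.2 b - w.1 b * w.2 a) (fun w => A w c) z
        = (if a = c then A z b else 0) - (if b = c then A z a else 0))
    (z : Phase) (v : Fin 3 → ℝ) (hzv : ∑ i, z.2 i * v i = 0)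
    (c : Fin 3) (hc : z.2 c ≠ 0) :
    fderiv ℝ (S A) z (0, v) = 0 := by
  have hlin : (((0 : Fin 3 → ℝ), v) : Phase)
      = ∑ a : Fin 3, v a • (((0 : Fin 3 → ℝ), (Pi.single a 1 : Fin 3 → ℝ)) : Phase) := by
    refine Prod.ext ?_ ?_
    · simp [Prod.fst_sum]
    · funext j
      simp only [Prod.snd_sum, Prod.smul_snd]
      rw [Fin.sum_univ_three]
      fin_cases j <;> simp
  rw [hlin, map_sum]
  simp only [map_smul, smul_eq_mul]
  have key : ∀ a : Fin 3, z.2 c * (v a * fderiv ℝ (S A) z (0, (Pi.single a 1 : Fin 3 → ℝ)))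
      = (z.2 a * v a) * fderiv ℝ (S A) z (0, (Pi.single c 1 : Fin 3 → ℝ)) := fun a => by
    linear_combination v a * stepD hA htrans hrot a c z
  have h2 : z.2 c * ∑ a : Fin 3,
      v a * fderiv ℝ (S A) z (0, (Pi.single a 1 : Fin 3 → ℝ)) = 0 := by
    rw [Finset.mul_sum]
    calc ∑ a : Fin 3, z.2 c * (v a * fderiv ℝ (S A) z (0, (Pi.single a 1 : Fin 3 → ℝ)))
        = ∑ a : Fin 3, (z.2 a * v a) * fderiv ℝ (S A) z (0, (Pi.single c 1 : Fin 3 → ℝ)) :=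
          Finset.sum_congr rfl fun a _ => key a
      _ = (∑ a : Fin 3, z.2 a * v a) * fderiv ℝ (S A) z (0, (Pi.single c 1 : Fin 3 → ℝ)) :=
          (Finset.sum_mul _ _ _).symm
      _ = 0 := by rw [hzv, zero_mul]
  exact (mul_eq_zero.mp h2).resolve_left hc

end InvAux

/-- **A translation-invariant, rotation-covariant, time-reversal-invariant vector observable has
no component along the momentum (spin-zero case)**: such a `C¹` map `A : ℝ³ × ℝ³ → ℝ³` satisfies
`A(x,p) · p = 0` everywhere. -/
theorem invariant_vector_orthogonal_to_momentum
    (A : Phase → Fin 3 → ℝ) (hC1 : ContDiff ℝ 1 A)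
    (htrans : ∀ a b : Fin 3, ∀ z : Phase, pb (fun w => w.2 a) (fun w => A w b) z = 0)
    (hrot : ∀ a b c : Fin 3, ∀ z : Phase,
      pb (fun w => w.1 a * w.2 b - w.1 b * w.2 a) (fun w => A w c) z
        = (if a = c then A z b else 0) - (if b = c then A z a else 0))
    (hT : ∀ x p : Fin 3 → ℝ, A (x, -p) = A (x, p)) :
    ∀ z : Phase, ∑ a, A z a * z.2 a = 0 := by
  have hA : Differentiable ℝ A := hC1.differentiable one_ne_zero
  rintro ⟨x, p⟩
  show InvAux.S A (x, p) = 0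
  by_cases hp : p = 0
  · subst hp; simp [InvAux.S]
  -- construct u ⊥ p with the same norm
  obtain ⟨u, hu1, hu2⟩ : ∃ u : Fin 3 → ℝ,
      (∑ i, u i * p i = 0) ∧ (∑ i, u i * u i = ∑ i, p i * p i) := by
    by_cases h01 : p 0 = 0 ∧ p 1 = 0
    · exact ⟨![p 2, 0, 0], by simp [Fin.sum_univ_three, h01.1],
        by simp [Fin.sum_univ_three, h01.1, h01.2]⟩
    · have hspos : 0 < p 0 ^ 2 + p 1 ^ 2 := by
        rcases not_and_or.mp h01 with h | h <;> positivity
      set r2 : ℝ := p 0 ^ 2 + p 1 ^ 2 + p 2 ^ 2 with hr2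
      have hr2nn : 0 ≤ r2 / (p 0 ^ 2 + p 1 ^ 2) := by positivity
      have hsq : Real.sqrt (r2 / (p 0 ^ 2 + p 1 ^ 2)) ^ 2 = r2 / (p 0 ^ 2 + p 1 ^ 2) :=
        Real.sq_sqrt hr2nn
      have hsq' : Real.sqrt (r2 / (p 0 ^ 2 + p 1 ^ 2)) ^ 2 * (p 0 ^ 2 + p 1 ^ 2) = r2 := by
        rw [hsq]; field_simp
      refine ⟨fun i => Real.sqrt (r2 / (p 0 ^ 2 + p 1 ^ 2)) * ![-p 1, p 0, 0] i, ?_, ?_⟩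
      · simp [Fin.sum_univ_three]; ring
      · simp only [Fin.sum_univ_three]
        simp only [Matrix.cons_val_zero, Matrix.cons_val_one, Matrix.head_cons,
          Matrix.cons_val_two, Matrix.tail_cons]
        linear_combination hsq'
  have hppos : 0 < ∑ i, p i * p i := by
    obtain ⟨i, hi⟩ : ∃ i, p i ≠ 0 := by
      by_contra h; push_neg at h; exact hp (funext h)
    exact Finset.sum_pos' (fun j _ => mul_self_nonneg _)
      ⟨i, Finset.mem_univ i, mul_self_pos.mpr hi⟩
  set q : ℝ → Fin 3 → ℝ := fun θ i => Real.cos θ * p i + Real.sin θ * u i with hq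
  have hγ : ∀ θ : ℝ, HasDerivAt (fun θ => ((x, q θ) : Phase))
      (((0 : Fin 3 → ℝ), fun i => -Real.sin θ * p i + Real.cos θ * u i)) θ := by
    intro θ
    apply HasDerivAt.prodMk (hasDerivAt_const θ x)
    rw [hasDerivAt_pi]
    intro i
    exact ((Real.hasDerivAt_cos θ).mul_const (p i)).add ((Real.hasDerivAt_sin θ).mul_const (u i))
  have horth : ∀ θ : ℝ, ∑ i, q θ i * (-Real.sin θ * p i + Real.cos θ * u i) = 0 := by
    intro θ
    simp only [hq, Fin.sum_univ_three] at hu1 hu2 ⊢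
    linear_combination (Real.cos θ ^ 2 - Real.sin θ ^ 2) * hu1
      + Real.sin θ * Real.cos θ * hu2
  have hnorm : ∀ θ : ℝ, ∑ i, q θ i * q θ i = ∑ i, p i * p i := by
    intro θ
    have hpyth := Real.sin_sq_add_cos_sq θ
    simp only [hq, Fin.sum_univ_three] at hu1 hu2 ⊢
    linear_combination (2 * Real.cos θ * Real.sin θ) * hu1 + Real.sin θ ^ 2 * hu2
      + (p 0 * p 0 + p 1 * p 1 + p 2 * p 2) * hpyth
  have hex : ∀ θ : ℝ, ∃ c, q θ c ≠ 0 := by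
    intro θ
    by_contra hall
    push_neg at hall
    have := hnorm θ
    simp only [hall, mul_zero, zero_mul, Finset.sum_const_zero] at this
    linarith
  have hh : ∀ θ : ℝ, HasDerivAt (fun θ => InvAux.S A (x, q θ)) 0 θ := by
    intro θ
    obtain ⟨c, hc⟩ := hex θ
    have hz : fderiv ℝ (InvAux.S A) (x, q θ) (0, fun i => -Real.sin θ * p i + Real.cos θ * u i) = 0 :=
      InvAux.stepE hA htrans hrot (x, q θ) _ (horth θ) c hc
    have hcomp := ((InvAux.hasF_S hA (x, q θ)).differentiableAt.hasFDerivAt).comp_hasDerivAt θ (hγ θ)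
    exact hz ▸ hcomp
  have hconst := is_const_of_deriv_eq_zero (fun θ => (hh θ).differentiableAt)
    (fun θ => (hh θ).deriv) 0 Real.pi
  have hq0 : q 0 = p := by funext i; simp [hq]
  have hqpi : q Real.pi = -p := by
    funext i; simp [hq, Real.cos_pi, Real.sin_pi]
  have hTz : InvAux.S A (x, -p) = - InvAux.S A (x, p) := by
    simp only [InvAux.S, hT x p, Pi.neg_apply, mul_neg]
    exact Finset.sum_neg_distrib _
  rw [hq0, hqpi, hTz] at hconst
  linarith
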